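/- Let N ≥ 1, let F : ℤ^N → ℤ^N be a polynomial endomorphism over ℤ, and let P ∈ ℤ^N be an F-periodic point with primitive period n. Then no prime q > 2^N divides n. -/

import Mathlib

/-- Polynomial evaluation over ℤ respects congruences (componentwise). -/
lemma eval_congr_aux {σ : Type*} (m : ℤ) (p : MvPolynomial σ ℤ) :
    ∀ x y : σ → ℤ, (∀ t, m ∣ x t - y t) →
      m ∣ MvPolynomial.eval x p - MvPolynomial.eval y p := by
  induction p using MvPolynomial.induction_on with
  | C a => intro x y h; simp
  | add p q hp hq =>
    intro x y h
    have h1 := hp x y h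
    have h2 := hq x y h
    have : MvPolynomial.eval x (p + q) - MvPolynomial.eval y (p + q)
        = (MvPolynomial.eval x p - MvPolynomial.eval y p)
          + (MvPolynomial.eval x q - MvPolynomial.eval y q) := by
      simp [MvPolynomial.eval_add]; ring
    rw [this]; exact dvd_add h1 h2
  | mul_X p t0 hp =>
    intro x y h
    have h1 := hp x y h
    have : MvPolynomial.eval x (p * MvPolynomial.X t0)
        - MvPolynomial.eval y (p * MvPolynomial.X t0)
        = (MvPolynomial.eval x p - MvPolynomial.eval y p) * x t0
          + MvPolynomial.eval y p * (x t0 - y t0) := by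
      simp [MvPolynomial.eval_mul]; ring
    rw [this]
    exact dvd_add (h1.mul_right _) ((h t0).mul_left _)

/-- An integer divisible by all powers of 2 is zero. -/
lemma eq_zero_of_all_pow_dvd (a : ℤ) (h : ∀ k : ℕ, (2 ^ k : ℤ) ∣ a) : a = 0 := by
  by_contra ha
  have h1 : (2 ^ a.natAbs : ℤ) ≤ |a| :=
    Int.le_of_dvd (abs_pos.mpr ha) ((dvd_abs _ _).mpr (h a.natAbs))
  have h2 : (a.natAbs : ℤ) < 2 ^ a.natAbs := by
    exact_mod_cast Nat.lt_two_pow_self (n := a.natAbs)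
  rw [Int.abs_eq_natAbs] at h1
  omega

/-- No prime `q > 2^N` divides the primitive period of an integral
periodic point of a polynomial endomorphism of `𝔸^N`. -/
theorem stmt11 (N : ℕ) (hN : 1 ≤ N)
    (f : Fin N → MvPolynomial (Fin N) ℤ)
    (F : (Fin N → ℤ) → (Fin N → ℤ))
    (hF : ∀ x, F x = fun i => MvPolynomial.eval x (f i))
    (P : Fin N → ℤ)
    (hP : ∃ k, 0 < k ∧ F^[k] P = P)
    (n : ℕ) (hn : n = Function.minimalPeriod F P) :
    ∀ q : ℕ, q.Prime → 2 ^ N < q → ¬ q ∣ n := by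
  intro q hq hql hdvd
  obtain ⟨k0, hk0, hk0'⟩ := hP
  have hnpos : 0 < n := by
    rw [hn]; exact Function.IsPeriodicPt.minimalPeriod_pos hk0 hk0'
  -- Congruence preservation by F
  have hcongF : ∀ (m : ℤ) (x y : Fin N → ℤ), (∀ t, m ∣ x t - y t) →
      ∀ t, m ∣ F x t - F y t := by
    intro m x y h t
    rw [hF x, hF y]
    exact eval_congr_aux m (f t) x y h
  -- Congruence preservation by iterates of F
  have hcongIt : ∀ (r : ℕ) (m : ℤ) (x y : Fin N → ℤ), (∀ t, m ∣ x t - y t) →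
      ∀ t, m ∣ F^[r] x t - F^[r] y t := by
    intro r
    induction r with
    | zero => intro m x y h t; simpa using h t
    | succ r ih =>
      intro m x y h t
      rw [Function.iterate_succ_apply, Function.iterate_succ_apply]
      exact ih m _ _ (hcongF m x y h) t
  set mq := n / q with hmq
  set G := F^[mq] with hG
  have hcongG : ∀ (r : ℕ) (m : ℤ) (x y : Fin N → ℤ), (∀ t, m ∣ x t - y t) →
      ∀ t, m ∣ G^[r] x t - G^[r] y t := by
    intro r m x y h t
    rw [hG, ← Function.iterate_mul]
    exact hcongIt (mq * r) m x y h t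
  have hGq : G^[q] P = P := by
    rw [hG, ← Function.iterate_mul, Nat.div_mul_cancel hdvd, hn]
    exact Function.iterate_minimalPeriod
  -- multiples of q are fixed
  have hQbq : ∀ b : ℕ, G^[b * q] P = P := by
    intro b
    induction b with
    | zero => simp
    | succ b ih =>
      have : (b + 1) * q = b * q + q := by ring
      rw [this, Function.iterate_add_apply, hGq, ih]
  -- main claim by induction on k
  have main : ∀ k : ℕ, ∀ i : ℕ, ∀ t, (2 ^ k : ℤ) ∣ (G^[i] P) t - P t := by
    intro k
    induction k with
    | zero => intro i t; simp
    | succ k ih =>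
      -- pigeonhole: two indices i < j ≤ 2^N with P_i ≡ P_j mod 2^(k+1)
      have hcard : Fintype.card (Fin N → ZMod 2) < Fintype.card (Fin (2 ^ N + 1)) := by
        simp [ZMod.card]
      obtain ⟨a, b, hab, hmap⟩ := Fintype.exists_ne_map_eq_of_card_lt
        (fun (i : Fin (2 ^ N + 1)) =>
          (fun t => ((((G^[(i : ℕ)] P) t - P t) / 2 ^ k : ℤ) : ZMod 2))) hcard
      -- divisibility between the two indices
      have hdivab : ∀ t, (2 ^ (k + 1) : ℤ) ∣ (G^[(a : ℕ)] P) t - (G^[(b : ℕ)] P) t := by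
        intro t
        have hmt := congrFun hmap t
        have h2 : (2 : ℤ) ∣ ((G^[(a : ℕ)] P) t - P t) / 2 ^ k
            - ((G^[(b : ℕ)] P) t - P t) / 2 ^ k := by
          have : ((((G^[(a : ℕ)] P) t - P t) / 2 ^ k
              - ((G^[(b : ℕ)] P) t - P t) / 2 ^ k : ℤ) : ZMod 2) = 0 := by
            push_cast
            rw [hmt]; ring
          exact_mod_cast (ZMod.intCast_zmod_eq_zero_iff_dvd _ 2).mp this
        have ea : (2 ^ k : ℤ) * (((G^[(a : ℕ)] P) t - P t) / 2 ^ k)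
            = (G^[(a : ℕ)] P) t - P t := Int.mul_ediv_cancel' (ih _ t)
        have eb : (2 ^ k : ℤ) * (((G^[(b : ℕ)] P) t - P t) / 2 ^ k)
            = (G^[(b : ℕ)] P) t - P t := Int.mul_ediv_cancel' (ih _ t)
        obtain ⟨c, hc⟩ := h2
        refine ⟨c, ?_⟩
        have : (G^[(a : ℕ)] P) t - (G^[(b : ℕ)] P) t
            = (2 ^ k : ℤ) * ((((G^[(a : ℕ)] P) t - P t) / 2 ^ k)
              - (((G^[(b : ℕ)] P) t - P t) / 2 ^ k)) := by
          rw [mul_sub, ea, eb]; ring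
        rw [this, hc, pow_succ]; ring
      -- normalize to u < v
      have key : ∃ u v : ℕ, u < v ∧ v < q ∧
          ∀ t, (2 ^ (k + 1) : ℤ) ∣ (G^[u] P) t - (G^[v] P) t := by
        have hblt : (b : ℕ) < q := lt_of_lt_of_le b.isLt (by omega)
        have halt : (a : ℕ) < q := lt_of_lt_of_le a.isLt (by omega)
        rcases lt_or_gt_of_ne (fun h : (a : ℕ) = (b : ℕ) => hab (Fin.ext h)) with h | h
        · exact ⟨a, b, h, hblt, hdivab⟩
        · exact ⟨b, a, h, halt, fun t => (dvd_sub_comm).mp (hdivab t)⟩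
      obtain ⟨u, v, huv, hvq, hdiv⟩ := key
      set d := v - u with hd
      have hdpos : 0 < d := by omega
      have hdq : d < q := by omega
      -- P ≡ G^[d] P mod 2^(k+1)
      have step1 : ∀ t, (2 ^ (k + 1) : ℤ) ∣ P t - (G^[d] P) t := by
        intro t
        have := hcongG (q - u) _ _ _ hdiv t
        have e1 : G^[q - u] (G^[u] P) = P := by
          rw [← Function.iterate_add_apply]
          have : q - u + u = q := by omega
          rw [this, hGq]
        have e2 : G^[q - u] (G^[v] P) = G^[d] P := by
          rw [← Function.iterate_add_apply]
          have h3 : q - u + v = d + q := by omega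
          rw [h3, Function.iterate_add_apply, hGq]
        rwa [e1, e2] at this
      -- chain: P ≡ G^[a*d] P
      have hchain : ∀ a : ℕ, ∀ t, (2 ^ (k + 1) : ℤ) ∣ P t - (G^[a * d] P) t := by
        intro a
        induction a with
        | zero => intro t; simp
        | succ a iha =>
          intro t
          have h1 := hcongG d _ _ _ iha t
          rw [← Function.iterate_add_apply] at h1
          have h2 : d + a * d = (a + 1) * d := by ring
          rw [h2] at h1
          have := dvd_add (step1 t) h1
          simpa using this
      -- invert d mod q : P ≡ G P
      have hnd : ¬ q ∣ d := fun h => absurd (Nat.le_of_dvd hdpos h) (by omega)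
      have hco : Nat.Coprime d q := ((hq.coprime_iff_not_dvd).mpr hnd).symm
      obtain ⟨a, -, ha⟩ := Nat.exists_mul_mod_eq_one_of_coprime hco hq.one_lt
      have hGP : ∀ t, (2 ^ (k + 1) : ℤ) ∣ P t - (G P) t := by
        intro t
        have hsplit : a * d = 1 + (d * a / q) * q := by
          have h := Nat.div_add_mod (d * a) q
          rw [ha] at h
          calc a * d = d * a := mul_comm a d
            _ = q * (d * a / q) + 1 := h.symm
            _ = 1 + (d * a / q) * q := by ring
        have hG1 : G^[a * d] P = G P := by
          rw [hsplit, Function.iterate_add_apply, hQbq]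
          simp
        have := hchain a t
        rwa [hG1] at this
      -- propagate: all iterates ≡ P
      intro i
      induction i with
      | zero => intro t; simp
      | succ i ihi =>
        intro t
        have h1 : (2 ^ (k + 1) : ℤ) ∣ G (G^[i] P) t - (G P) t := by
          have := hcongG 1 _ _ _ ihi t
          simpa using this
        have h2 : (2 ^ (k + 1) : ℤ) ∣ (G P) t - P t := dvd_sub_comm.mp (hGP t)
        have h3 := dvd_add h1 h2
        rw [Function.iterate_succ_apply']
        have : G (G^[i] P) t - (G P) t + ((G P) t - P t)
            = G (G^[i] P) t - P t := by ring
        rwa [this] at h3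
  -- conclude: G P = P
  have hGPeq : G P = P := by
    funext t
    have hz : G P t - P t = 0 := by
      apply eq_zero_of_all_pow_dvd
      intro k
      have := main k 1 t
      simpa using this
    linarith [hz]
  -- contradiction with minimal period
  have hper : Function.IsPeriodicPt F mq P := hGPeq
  have hdvd2 : n ∣ mq := by
    rw [hn]; exact hper.minimalPeriod_dvd
  have hmqpos : 0 < mq := Nat.div_pos (Nat.le_of_dvd hnpos hdvd) hq.pos
  have hmqlt : mq < n := Nat.div_lt_self hnpos hq.one_lt
  have := Nat.le_of_dvd hmqpos hdvd2
  omega
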